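/- If f: ℤ/nℤ → ℤ/nℤ is a permutation with f(0) = 0 such that the subgroup of Sym(ℤ/nℤ) generated by the translation t: x ↦ x+1 and f has order n times the order of f, then f is a skew-morphism of ℤ/nℤ. -/

import Mathlib

/-- A bijection `f` of `ℤ/nℤ` is a skew-morphism if `f 0 = 0` and there is a
power function `π` with `f (x+y) = f x + f^(π x) y` for all `x, y`. -/
def IsSkewMorphism {n : ℕ} (f : Equiv.Perm (ZMod n)) : Prop :=
  f 0 = 0 ∧ ∃ π : ZMod n → ℤ, ∀ x y : ZMod n, f (x + y) = f x + (f ^ π x) y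

/-- If `f` is a permutation of `ℤ/nℤ` fixing `0` such that the subgroup generated
by the translation `t : x ↦ x + 1` and `f` has order `n * |f|`, then `f` is a
skew-morphism of `ℤ/nℤ`. -/
theorem stmt_3 (n : ℕ) (hn : 0 < n) (f : Equiv.Perm (ZMod n)) (hf0 : f 0 = 0)
    (hcard : Nat.card (Subgroup.closure {Equiv.addLeft (1 : ZMod n), f}) = n * orderOf f) :
    IsSkewMorphism f := by
  haveI : NeZero n := ⟨hn.ne'⟩
  set t := Equiv.addLeft (1 : ZMod n) with ht
  set G := Subgroup.closure {t, f} with hG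
  have htG : t ∈ G := Subgroup.subset_closure (by simp)
  have hfG : f ∈ G := Subgroup.subset_closure (by simp)
  have haddG : ∀ a : ZMod n, Equiv.addLeft a ∈ G := by
    intro a
    have h1 : t ^ a.val = Equiv.addLeft a := by
      have hp : ∀ m : ℕ, (Equiv.addLeft (1 : ZMod n)) ^ m = Equiv.addLeft (m • (1 : ZMod n)) := by
        intro m
        induction m with
        | zero => ext x; simp
        | succ m ih =>
          ext x
          rw [pow_succ, Equiv.Perm.mul_apply, ih]
          simp [succ_nsmul]
      rw [ht, hp]
      congr 1
      simp [ZMod.natCast_val]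
    rw [← h1]
    exact pow_mem htG _
  -- fixed points of powers of f
  have hfix : ∀ k : ℤ, (f ^ k) 0 = 0 := by
    intro k
    have hf' : f ∈ MulAction.stabilizer (Equiv.Perm (ZMod n)) (0 : ZMod n) := hf0
    exact zpow_mem hf' k
  -- orbit of 0 under G is everything
  have horb : MulAction.orbit G (0 : ZMod n) = Set.univ := by
    ext a
    simp only [Set.mem_univ, iff_true, MulAction.mem_orbit_iff]
    exact ⟨⟨Equiv.addLeft a, haddG a⟩, by simp [Subgroup.smul_def]⟩
  have hcardorb : Nat.card (MulAction.orbit G (0 : ZMod n)) = n := by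
    rw [horb]
    exact (Nat.card_congr (Equiv.Set.univ (ZMod n))).trans (Nat.card_zmod n)
  -- orbit-stabilizer
  set S := MulAction.stabilizer G (0 : ZMod n) with hS
  have hos : Nat.card (MulAction.orbit G (0 : ZMod n)) * Nat.card S = Nat.card G := by
    rw [← Nat.card_prod]
    exact Nat.card_congr (MulAction.orbitProdStabilizerEquivGroup G 0)
  have hcardS : Nat.card S = orderOf f := by
    rw [hcardorb] at hos
    exact Nat.eq_of_mul_eq_mul_left hn (hos.trans hcard)
  set f' : G := ⟨f, hfG⟩ with hf'
  have hordf' : orderOf f' = orderOf f := by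
    have := orderOf_injective G.subtype (Subgroup.subtype_injective G) f'
    exact this.symm
  have hzle : Subgroup.zpowers f' ≤ S := by
    rintro - ⟨k, rfl⟩
    show ((f' ^ k : G) : Equiv.Perm (ZMod n)) • (0 : ZMod n) = 0
    rw [SubgroupClass.coe_zpow]
    exact hfix k
  have hzS : Subgroup.zpowers f' = S := by
    apply Subgroup.eq_of_le_of_card_ge hzle
    rw [hcardS, Nat.card_zpowers, hordf']
  refine ⟨hf0, ?_⟩
  have key : ∀ x : ZMod n, ∃ k : ℤ, ∀ y : ZMod n, f (x + y) = f x + (f ^ k) y := by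
    intro x
    set g : Equiv.Perm (ZMod n) := (Equiv.addLeft (f x))⁻¹ * (f * Equiv.addLeft x) with hg
    have hgG : g ∈ G := mul_mem (inv_mem (haddG _)) (mul_mem hfG (haddG _))
    have hg0 : (⟨g, hgG⟩ : G) ∈ S := by
      show g • (0 : ZMod n) = 0
      simp [hg, Equiv.Perm.smul_def, Equiv.Perm.mul_apply]
    rw [← hzS] at hg0
    obtain ⟨k, hk⟩ := hg0
    refine ⟨k, fun y => ?_⟩
    have hk' : (f : Equiv.Perm (ZMod n)) ^ k = g := by
      have := congrArg (Subtype.val) hk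
      simpa [SubgroupClass.coe_zpow] using this
    have : (f ^ k) y = -(f x) + f (x + y) := by
      rw [hk']
      simp [hg, Equiv.Perm.mul_apply]
    rw [this]
    abel
  choose π hπ using key
  exact ⟨π, hπ⟩
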